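/- Let L : ℝⁿ → ℝ be a non-negative convex function with L(0) = 0 and L(x) > 0 for x ≠ 0. Then L satisfies the two-sided Δ₂-condition if and only if sup_{x ≠ 0} L′(x, x)/L(x) < ∞, where L′(x, θ) denotes the directional derivative of L at x in direction θ. Equivalently, L satisfies the two-sided Δ₂-condition if and only if sup_{x ≠ 0} sup_{y ∈ ∂L(x)} ⟨x, y⟩/L(x) < ∞. -/

import Mathlib

/-- The subdifferential of `L` at `x`. -/
def subdiff {n : ℕ} (L : EuclideanSpace ℝ (Fin n) → ℝ) (x : EuclideanSpace ℝ (Fin n)) :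
    Set (EuclideanSpace ℝ (Fin n)) :=
  {y | ∀ z, L x + (inner ℝ y (z - x) : ℝ) ≤ L z}

/-- The directional derivative `L′(x, θ) = inf_{ε > 0} (L(x + εθ) − L(x))/ε`. -/
noncomputable def dirDeriv {n : ℕ} (L : EuclideanSpace ℝ (Fin n) → ℝ)
    (x θ : EuclideanSpace ℝ (Fin n)) : ℝ :=
  sInf ((fun ε : ℝ => (L (x + ε • θ) - L x) / ε) '' Set.Ioi 0)

section Helpers

variable {n : ℕ} {L : EuclideanSpace ℝ (Fin n) → ℝ}

private lemma conv2 (hconv : ConvexOn ℝ Set.univ L) {a b : ℝ}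
    (x y : EuclideanSpace ℝ (Fin n)) (ha : 0 ≤ a) (hb : 0 ≤ b) (hab : a + b = 1) :
    L (a • x + b • y) ≤ a * L x + b * L y :=
  hconv.2 (Set.mem_univ _) (Set.mem_univ _) ha hb hab

private lemma slope_mono (hconv : ConvexOn ℝ Set.univ L) (x θ : EuclideanSpace ℝ (Fin n))
    {a b : ℝ} (ha : 0 < a) (hab : a ≤ b) :
    (L (x + a • θ) - L x) / a ≤ (L (x + b • θ) - L x) / b := by
  have hb : 0 < b := ha.trans_le hab
  have hc1 : 0 ≤ a / b := by positivity
  have hc2 : 0 ≤ 1 - a / b := by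
    rw [sub_nonneg]
    exact div_le_one_of_le₀ hab hb.le
  have key := conv2 hconv (a := 1 - a/b) (b := a/b) x (x + b • θ) hc2 hc1 (by ring)
  have heq : (1 - a/b) • x + (a/b) • (x + b • θ) = x + a • θ := by
    match_scalars <;> field_simp <;> ring
  rw [heq] at key
  rw [div_le_div_iff₀ ha hb]
  have key' := mul_le_mul_of_nonneg_right key hb.le
  have hexp : ((1 - a/b) * L x + a/b * L (x + b • θ)) * b
      = (b - a) * L x + a * L (x + b • θ) := by field_simp; try ring
  rw [hexp] at key'
  nlinarith

private lemma slope_lb (hconv : ConvexOn ℝ Set.univ L) (x θ : EuclideanSpace ℝ (Fin n))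
    {ε : ℝ} (hε : 0 < ε) :
    L x - L (x - θ) ≤ (L (x + ε • θ) - L x) / ε := by
  have h1 : (0:ℝ) < 1 + ε := by linarith
  have key := conv2 hconv (a := ε/(1+ε)) (b := 1/(1+ε)) (x - θ) (x + ε • θ)
    (by positivity) (by positivity) (by field_simp; try ring)
  have heq : (ε/(1+ε)) • (x - θ) + (1/(1+ε)) • (x + ε • θ) = x := by
    match_scalars <;> (field_simp; try ring)
  rw [heq] at key
  rw [le_div_iff₀ hε]
  have key' := mul_le_mul_of_nonneg_right key h1.le
  have hexp : (ε/(1+ε) * L (x - θ) + 1/(1+ε) * L (x + ε • θ)) * (1+ε)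
      = ε * L (x - θ) + L (x + ε • θ) := by field_simp; try ring
  rw [hexp] at key'
  nlinarith

private lemma slopes_bddBelow (hconv : ConvexOn ℝ Set.univ L) (x θ : EuclideanSpace ℝ (Fin n)) :
    BddBelow ((fun ε : ℝ => (L (x + ε • θ) - L x) / ε) '' Set.Ioi 0) := by
  refine ⟨L x - L (x - θ), ?_⟩
  rintro _ ⟨ε, hε, rfl⟩
  exact slope_lb hconv x θ hε

private lemma dirDeriv_le_slope (hconv : ConvexOn ℝ Set.univ L)
    (x θ : EuclideanSpace ℝ (Fin n)) {ε : ℝ} (hε : 0 < ε) :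
    dirDeriv L x θ ≤ (L (x + ε • θ) - L x) / ε :=
  csInf_le (slopes_bddBelow hconv x θ) ⟨ε, hε, rfl⟩

private lemma le_dirDeriv (x θ : EuclideanSpace ℝ (Fin n)) {c : ℝ}
    (h : ∀ ε : ℝ, 0 < ε → c ≤ (L (x + ε • θ) - L x) / ε) : c ≤ dirDeriv L x θ :=
  le_csInf ⟨_, ⟨1, Set.mem_Ioi.mpr one_pos, rfl⟩⟩ (by rintro _ ⟨ε, hε, rfl⟩; exact h ε hε)

private lemma dirDeriv_zero (x : EuclideanSpace ℝ (Fin n)) : dirDeriv L x 0 = 0 := by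
  simp only [dirDeriv, smul_zero, add_zero, sub_self, zero_div]
  rw [Set.Nonempty.image_const ⟨1, Set.mem_Ioi.mpr one_pos⟩]
  exact csInf_singleton 0

private lemma dirDeriv_le_sub (hconv : ConvexOn ℝ Set.univ L)
    (x z : EuclideanSpace ℝ (Fin n)) : dirDeriv L x (z - x) ≤ L z - L x := by
  have h := dirDeriv_le_slope hconv x (z - x) one_pos
  simpa using h

private lemma dirDeriv_smul (hconv : ConvexOn ℝ Set.univ L)
    (x θ : EuclideanSpace ℝ (Fin n)) {c : ℝ} (hc : 0 < c) :
    dirDeriv L x (c • θ) = c * dirDeriv L x θ := by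
  apply le_antisymm
  · rw [mul_comm, ← div_le_iff₀ hc]
    refine le_dirDeriv x θ (fun ε hε => ?_)
    have h1 := dirDeriv_le_slope hconv x (c • θ) (div_pos hε hc)
    rw [smul_smul, div_mul_cancel₀ _ hc.ne'] at h1
    rw [div_div_eq_mul_div] at h1
    rw [div_le_iff₀ hc, div_mul_eq_mul_div]
    exact h1
  · refine le_dirDeriv x (c • θ) (fun ε hε => ?_)
    have h1 := dirDeriv_le_slope hconv x θ (mul_pos hε hc)
    have h2 := mul_le_mul_of_nonneg_left h1 hc.le
    have h3 : c * ((L (x + (ε * c) • θ) - L x) / (ε * c)) = (L (x + (ε * c) • θ) - L x) / ε := by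
      field_simp
    rw [h3] at h2
    rw [smul_smul]
    exact h2

private lemma dirDeriv_add (hconv : ConvexOn ℝ Set.univ L)
    (x θ₁ θ₂ : EuclideanSpace ℝ (Fin n)) :
    dirDeriv L x (θ₁ + θ₂) ≤ dirDeriv L x θ₁ + dirDeriv L x θ₂ := by
  have key : ∀ ε₁ : ℝ, 0 < ε₁ → ∀ ε₂ : ℝ, 0 < ε₂ → dirDeriv L x (θ₁ + θ₂) ≤
      (L (x + ε₁ • θ₁) - L x) / ε₁ + (L (x + ε₂ • θ₂) - L x) / ε₂ := by
    intro ε₁ h₁ ε₂ h₂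
    set m := min ε₁ ε₂ with hm
    have hm0 : 0 < m := lt_min h₁ h₂
    have hq1 : (L (x + m • θ₁) - L x) / m ≤ (L (x + ε₁ • θ₁) - L x) / ε₁ :=
      slope_mono hconv x θ₁ hm0 (min_le_left _ _)
    have hq2 : (L (x + m • θ₂) - L x) / m ≤ (L (x + ε₂ • θ₂) - L x) / ε₂ :=
      slope_mono hconv x θ₂ hm0 (min_le_right _ _)
    have hmid : dirDeriv L x (θ₁ + θ₂) ≤ (L (x + (m/2) • (θ₁ + θ₂)) - L x) / (m/2) :=
      dirDeriv_le_slope hconv x _ (by positivity)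
    have hconv2 := conv2 hconv (a := (1:ℝ)/2) (b := (1:ℝ)/2) (x + m • θ₁) (x + m • θ₂)
      (by norm_num) (by norm_num) (by norm_num)
    have heq : ((1:ℝ)/2) • (x + m • θ₁) + ((1:ℝ)/2) • (x + m • θ₂)
        = x + (m/2) • (θ₁ + θ₂) := by
      match_scalars <;> ring
    rw [heq] at hconv2
    have harith : (L (x + (m/2) • (θ₁ + θ₂)) - L x) / (m/2)
        ≤ (L (x + m • θ₁) - L x) / m + (L (x + m • θ₂) - L x) / m := by
      rw [← add_div, div_le_div_iff₀ (by positivity : (0:ℝ) < m/2) hm0]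
      nlinarith [hm0.le]
    linarith
  have step1 : ∀ ε₂ : ℝ, 0 < ε₂ →
      dirDeriv L x (θ₁ + θ₂) - (L (x + ε₂ • θ₂) - L x) / ε₂ ≤ dirDeriv L x θ₁ := by
    intro ε₂ h₂
    refine le_dirDeriv x θ₁ (fun ε₁ h₁ => ?_)
    linarith [key ε₁ h₁ ε₂ h₂]
  have step2 : dirDeriv L x (θ₁ + θ₂) - dirDeriv L x θ₁ ≤ dirDeriv L x θ₂ := by
    refine le_dirDeriv x θ₂ (fun ε₂ h₂ => ?_)
    linarith [step1 ε₂ h₂]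
  linarith

private lemma exists_subgradient (hconv : ConvexOn ℝ Set.univ L)
    (x : EuclideanSpace ℝ (Fin n)) (hx : x ≠ 0) :
    ∃ y ∈ subdiff L x, (inner ℝ x y : ℝ) = dirDeriv L x x := by
  set N : EuclideanSpace ℝ (Fin n) → ℝ := dirDeriv L x with hN
  have N_hom : ∀ c : ℝ, 0 < c → ∀ θ, N (c • θ) = c * N θ := fun c hc θ =>
    dirDeriv_smul hconv x θ hc
  have N_add : ∀ θ₁ θ₂, N (θ₁ + θ₂) ≤ N θ₁ + N θ₂ := dirDeriv_add hconv x
  have hN0 : N 0 = 0 := dirDeriv_zero x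
  have hNsum : 0 ≤ N x + N (-x) := by
    have h := N_add x (-x)
    rw [add_neg_cancel, hN0] at h
    linarith
  set f : EuclideanSpace ℝ (Fin n) →ₗ.[ℝ] ℝ := LinearPMap.mkSpanSingleton x (N x) hx with hf_def
  have hf : ∀ z : f.domain, f z ≤ N z := by
    rintro ⟨z, hz⟩
    obtain ⟨c, rfl⟩ := Submodule.mem_span_singleton.mp hz
    have happ : f ⟨c • x, hz⟩ = c • N x := LinearPMap.mkSpanSingleton'_apply x (N x) _ c hz
    rw [happ, smul_eq_mul]
    rcases lt_trichotomy c 0 with hc | hc | hc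
    · have hcx : c • x = (-c) • (-x) := by module
      rw [show ((⟨c • x, hz⟩ : f.domain) : EuclideanSpace ℝ (Fin n)) = c • x from rfl, hcx,
        N_hom (-c) (by linarith) (-x)]
      nlinarith
    · subst hc
      simp [hN0]
    · rw [show ((⟨c • x, hz⟩ : f.domain) : EuclideanSpace ℝ (Fin n)) = c • x from rfl,
        N_hom c hc x]
  obtain ⟨g, hg_eq, hg_le⟩ := exists_extension_of_le_sublinear f N N_hom N_add hf
  set y := (InnerProductSpace.toDual ℝ (EuclideanSpace ℝ (Fin n))).symm
    (LinearMap.toContinuousLinearMap g) with hy_def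
  have hy : ∀ w, (inner ℝ y w : ℝ) = g w := fun w => InnerProductSpace.toDual_symm_apply
  refine ⟨y, ?_, ?_⟩
  · intro z
    have h1 : (inner ℝ y (z - x) : ℝ) = g (z - x) := hy _
    have h2 : g (z - x) ≤ N (z - x) := hg_le _
    have h3 : N (z - x) ≤ L z - L x := dirDeriv_le_sub hconv x z
    rw [h1]
    linarith
  · have hx_mem : x ∈ f.domain := Submodule.mem_span_singleton_self x
    have h4 : g x = N x := by
      have h5 := hg_eq ⟨x, hx_mem⟩
      rw [LinearPMap.mkSpanSingleton_apply] at h5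
      exact h5
    rw [real_inner_comm, hy, h4]

private lemma delta2_of_dirDeriv (hconv : ConvexOn ℝ Set.univ L) (h0 : L 0 = 0)
    (hpos : ∀ x, x ≠ 0 → 0 < L x) (M : ℝ)
    (hM : ∀ x, x ≠ 0 → dirDeriv L x x ≤ M * L x) :
    ∃ C : ℝ, ∀ x : EuclideanSpace ℝ (Fin n), L ((2:ℝ) • x) ≤ C * L x := by
  set p : ℝ := max M 1 + 1 with hp
  have hp1 : 1 ≤ p := by have := le_max_right M 1; linarith
  have hMp : M ≤ p - 1 := by have := le_max_left M 1; linarith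
  refine ⟨(2:ℝ) ^ p, fun x => ?_⟩
  rcases eq_or_ne x 0 with rfl | hx
  · simp [h0]
  have hLcont : Continuous L := hconv.locallyLipschitz.continuous
  set S : Set ℝ := Set.Icc (1:ℝ) 2 ∩ {t : ℝ | L (t • x) ≤ t ^ p * L x} with hS
  have h2cont : Continuous fun t : ℝ => L (t • x) :=
    hLcont.comp (continuous_id.smul continuous_const)
  have h3cont : Continuous fun t : ℝ => t ^ p * L x := by
    have : Continuous fun t : ℝ => t ^ p := continuous_iff_continuousAt.mpr fun t =>
      Real.continuousAt_rpow_const t p (Or.inr (by linarith))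
    exact this.mul continuous_const
  have hS_closed : IsClosed S := isClosed_Icc.inter (isClosed_le h2cont h3cont)
  have h1S : (1:ℝ) ∈ S := by
    refine ⟨⟨le_refl 1, by norm_num⟩, ?_⟩
    simp [Real.one_rpow]
  have hbdd : BddAbove S := ⟨2, fun t ht => ht.1.2⟩
  set T := sSup S with hT
  have hTS : T ∈ S := hS_closed.csSup_mem ⟨1, h1S⟩ hbdd
  have hT1 : 1 ≤ T := le_csSup hbdd h1S
  have hT2 : T ≤ 2 := hTS.1.2
  have hT_eq : T = 2 := by
    by_contra hne
    have hTlt : T < 2 := lt_of_le_of_ne hT2 hne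
    have hT0 : 0 < T := by linarith
    set x' := T • x with hx'
    have hx'0 : x' ≠ 0 := smul_ne_zero hT0.ne' hx
    have hL' : 0 < L x' := hpos _ hx'0
    have hlt : dirDeriv L x' x' < p * L x' := by
      have hd := hM x' hx'0
      nlinarith
    simp only [dirDeriv] at hlt
    obtain ⟨a, ha, hq⟩ := exists_lt_of_csInf_lt
      (s := ((fun ε : ℝ => (L (x' + ε • x') - L x') / ε) '' Set.Ioi 0))
      ⟨_, ⟨1, Set.mem_Ioi.mpr one_pos, rfl⟩⟩ hlt
    obtain ⟨ε₀, hε₀, rfl⟩ := ha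
    have hε₀' : (0:ℝ) < ε₀ := hε₀
    set ε := min ε₀ ((2 - T)/T) with hε
    have hεpos : 0 < ε := lt_min hε₀' (div_pos (by linarith) hT0)
    have hq' : (L (x' + ε • x') - L x') / ε < p * L x' :=
      lt_of_le_of_lt (slope_mono hconv x' x' hεpos (min_le_left _ _)) hq
    set t' := T * (1 + ε) with ht'
    have hεT : ε * T ≤ 2 - T := (le_div_iff₀ hT0).mp (min_le_right _ _)
    have ht'le : t' ≤ 2 := by
      have : T * (1 + ε) = T + ε * T := by ring
      linarith
    have ht'gt : T < t' := by nlinarith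
    have hkey : L (t' • x) < (1 + p * ε) * L x' := by
      rw [div_lt_iff₀ hεpos] at hq'
      have hxx : x' + ε • x' = t' • x := by rw [hx', ht']; module
      rw [hxx] at hq'
      nlinarith
    have hbern : 1 + p * ε ≤ (1 + ε) ^ p :=
      one_add_mul_self_le_rpow_one_add (by linarith) hp1
    have hx'le : L x' ≤ T ^ p * L x := hTS.2
    have ht'mem : t' ∈ S := by
      refine ⟨⟨by nlinarith, ht'le⟩, ?_⟩
      have hTp : (0:ℝ) ≤ T ^ p := Real.rpow_nonneg hT0.le p
      have hc1 : L (t' • x) ≤ (1 + ε) ^ p * (T ^ p * L x) := by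
        have := mul_le_mul hbern hx'le hL'.le (by positivity : (0:ℝ) ≤ (1+ε) ^ p)
        linarith [hkey]
      have hc2 : (1 + ε) ^ p * (T ^ p * L x) = t' ^ p * L x := by
        rw [← mul_assoc, ← Real.mul_rpow (by linarith : (0:ℝ) ≤ 1 + ε) hT0.le, ht',
          mul_comm (1 + ε) T]
      rw [hc2] at hc1
      exact hc1
    have : t' ≤ T := le_csSup hbdd ht'mem
    linarith
  have h2S : (2:ℝ) ∈ S := hT_eq ▸ hTS
  exact h2S.2

end Helpers

theorem stmt10 {n : ℕ} (L : EuclideanSpace ℝ (Fin n) → ℝ) (hconv : ConvexOn ℝ Set.univ L)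
    (hnonneg : ∀ x, 0 ≤ L x) (h0 : L 0 = 0) (hpos : ∀ x, x ≠ 0 → 0 < L x) :
    ((∃ C : ℝ, ∀ x : EuclideanSpace ℝ (Fin n), L ((2 : ℝ) • x) ≤ C * L x) ↔
      (∃ M : ℝ, ∀ x : EuclideanSpace ℝ (Fin n), x ≠ 0 → dirDeriv L x x / L x ≤ M)) ∧
    ((∃ C : ℝ, ∀ x : EuclideanSpace ℝ (Fin n), L ((2 : ℝ) • x) ≤ C * L x) ↔
      (∃ M : ℝ, ∀ x : EuclideanSpace ℝ (Fin n), x ≠ 0 →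
        ∀ y ∈ subdiff L x, (inner ℝ x y : ℝ) / L x ≤ M)) := by
  constructor
  · constructor
    · rintro ⟨C, hC⟩
      refine ⟨C, fun x hx => ?_⟩
      have hL : 0 < L x := hpos x hx
      rw [div_le_iff₀ hL]
      have h1 : dirDeriv L x x ≤ (L (x + (1:ℝ) • x) - L x) / 1 :=
        dirDeriv_le_slope hconv x x one_pos
      have h2 : x + (1:ℝ) • x = (2:ℝ) • x := by module
      rw [h2] at h1
      have h3 := hC x
      have h4 := hnonneg x
      simp only [div_one] at h1
      linarith
    · rintro ⟨M, hM⟩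
      refine delta2_of_dirDeriv hconv h0 hpos M (fun x hx => ?_)
      have hL := hpos x hx
      exact (div_le_iff₀ hL).mp (hM x hx)
  · constructor
    · rintro ⟨C, hC⟩
      refine ⟨C, fun x hx y hy => ?_⟩
      have hL : 0 < L x := hpos x hx
      rw [div_le_iff₀ hL]
      have h1 := hy ((2:ℝ) • x)
      have h2 : (2:ℝ) • x - x = x := by module
      rw [h2] at h1
      have h3 := hC x
      have h4 : (inner ℝ x y : ℝ) = inner ℝ y x := real_inner_comm y x
      have h5 := hnonneg x
      linarith
    · rintro ⟨M, hM⟩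
      refine delta2_of_dirDeriv hconv h0 hpos M (fun x hx => ?_)
      obtain ⟨y, hy, hyeq⟩ := exists_subgradient hconv x hx
      have h1 := hM x hx y hy
      have hL := hpos x hx
      rw [div_le_iff₀ hL] at h1
      rw [← hyeq]
      exact h1
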